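/- Let Γ be a countably infinite group with a proper right-invariant metric d, and let α be a free continuous action of Γ on a nonempty Polish space X. Then for every sequence (d₀, d₁, …) in [0, ∞) there exists a Baire measurable coloring f : X → ℕ such that for every c ∈ ℕ: whenever x, y ∈ X are distinct, f(x) = f(y) = c, and γ · x = y for some γ ∈ Γ, then d(1, γ) > d_c. -/

import Mathlib

open Set Function Topology

namespace DescColor

/-- A set is *Baire measurable* if it differs from an open set by a meager set. -/
def BaireMSet {X : Type*} [TopologicalSpace X] (S : Set X) : Prop :=
  ∃ U : Set X, IsOpen U ∧ IsMeagre (symmDiff S U)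

/-- A function is *Baire measurable* if preimages of measurable (Borel) sets are
Baire measurable. -/
def BaireMFun {X Y : Type*} [TopologicalSpace X] [MeasurableSpace Y] (f : X → Y) : Prop :=
  ∀ B : Set Y, MeasurableSet B → BaireMSet (f ⁻¹' B)

variable {Γ : Type*}

/-- The shift action of `Γ` on colorings `Γ → ℕ`: `(γ · ω)(δ) = ω (δ γ)`. -/
def shift [Group Γ] (γ : Γ) (ω : Γ → ℕ) : Γ → ℕ := fun δ => ω (δ * γ)

/-- A subshift: a closed shift-invariant set of colorings. -/
def IsSubshift [Group Γ] (Ω : Set (Γ → ℕ)) : Prop :=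
  IsClosed Ω ∧ ∀ (γ : Γ), ∀ ω ∈ Ω, shift γ ω ∈ Ω

/-- The coding map `π_f(x)(γ) = f (γ • x)`. -/
def codingMap [Group Γ] {X : Type*} [MulAction Γ X] (f : X → ℕ) (x : X) : Γ → ℕ :=
  fun γ => f (γ • x)

/-- The action of `Γ` on `X` admits a Baire measurable `Ω`-coloring. -/
def HasBMColoring [Group Γ] (X : Type*) [TopologicalSpace X] [MulAction Γ X]
    (Ω : Set (Γ → ℕ)) : Prop :=
  ∃ f : X → ℕ, BaireMFun f ∧ {x : X | codingMap f x ∈ Ω} ∈ residual X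

/-- The action of `Γ` on `X` is generically smooth. -/
def GenSmooth (Γ : Type*) [Group Γ] (X : Type*) [TopologicalSpace X] [MulAction Γ X] : Prop :=
  ∃ f : X → ℝ, BaireMFun f ∧ ∀ x y : X, f x = f y ↔ ∃ γ : Γ, γ • x = y

/-- The shift action of `Γ` on `ℕ^Γ` admits a Baire measurable `Ω`-coloring. -/
def ShiftHasBMColoring (Γ : Type*) [Group Γ] (Ω : Set (Γ → ℕ)) : Prop :=
  ∃ f : (Γ → ℕ) → ℕ, BaireMFun f ∧
    {ω : Γ → ℕ | (fun γ : Γ => f (shift γ ω)) ∈ Ω} ∈ residual (Γ → ℕ)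

/-- A free continuous action of `Γ` on a Polish space. -/
structure FreePolishAction (Γ : Type*) [Group Γ] where
  X : Type
  ts : TopologicalSpace X
  polish : @PolishSpace X ts
  smul : Γ → X → X
  one_smul' : ∀ x, smul 1 x = x
  mul_smul' : ∀ γ δ x, smul (γ * δ) x = smul γ (smul δ x)
  cont : ∀ γ : Γ, @Continuous X X ts ts (smul γ)
  free : ∀ (γ : Γ) (x : X), smul γ x = x → γ = 1

/-- A free continuous action on a Polish space admits a Baire measurable `Ω`-coloring. -/
def FreePolishAction.HasBMCol [Group Γ] (α : FreePolishAction Γ) (Ω : Set (Γ → ℕ)) : Prop :=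
  letI := α.ts
  ∃ f : α.X → ℕ, BaireMFun f ∧ {x : α.X | (fun γ : Γ => f (α.smul γ x)) ∈ Ω} ∈ residual α.X

/-- A free continuous action on a Polish space is generically smooth. -/
def FreePolishAction.IsGenSmooth [Group Γ] (α : FreePolishAction Γ) : Prop :=
  letI := α.ts
  ∃ f : α.X → ℝ, BaireMFun f ∧ ∀ x y : α.X, f x = f y ↔ ∃ γ : Γ, α.smul γ x = y

/-- A subshift is *hard* if every free continuous action of `Γ` on a Polish space that
admits a Baire measurable `Ω`-coloring is generically smooth. -/
def Hard (Γ : Type*) [Group Γ] (Ω : Set (Γ → ℕ)) : Prop :=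
  ∀ α : FreePolishAction Γ, α.HasBMCol Ω → α.IsGenSmooth

/-- A subshift is *easy* if every free continuous action of `Γ` on a Polish space
admits a Baire measurable `Ω`-coloring. -/
def Easy (Γ : Type*) [Group Γ] (Ω : Set (Γ → ℕ)) : Prop :=
  ∀ α : FreePolishAction Γ, α.HasBMCol Ω

/-- Finite partial colorings of `Γ`: partial maps `Γ ⇀ ℕ` with finite domain. -/
abbrev FPC (Γ : Type*) : Type _ := {φ : Γ → Option ℕ // {γ : Γ | φ γ ≠ none}.Finite}

/-- The domain of a finite partial coloring. -/
def domP (φ : FPC Γ) : Set Γ := {γ : Γ | φ.1 γ ≠ none}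

/-- `Fin(Ω)`: the set of finite partial colorings extending to an element of `Ω`. -/
def FinOf (Ω : Set (Γ → ℕ)) : Set (FPC Γ) :=
  {φ | ∃ ω ∈ Ω, ∀ (γ : Γ) (c : ℕ), φ.1 γ = some c → ω γ = c}

/-- `g : FPC Γ → Bool` codes (the set `Fin(Ω)` of) the subshift `Ω`. -/
def CodesSubshift [Group Γ] (g : FPC Γ → Bool) (Ω : Set (Γ → ℕ)) : Prop :=
  IsSubshift Ω ∧ ∀ φ : FPC Γ, g φ = true ↔ φ ∈ FinOf Ω

/-- The shift action of `Γ` on finite partial colorings: `(γ · φ)(δ) = φ(δγ)`. -/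
def shiftP [Group Γ] (γ : Γ) (φ : FPC Γ) : FPC Γ :=
  ⟨fun δ => φ.1 (δ * γ), by
    apply (φ.2.image fun δ => δ * γ⁻¹).subset
    intro δ hδ
    exact ⟨δ * γ, hδ, by simp⟩⟩

/-- The empty partial coloring. -/
def emptyP (Γ : Type*) : FPC Γ := ⟨fun _ => none, by simp⟩

/-- The union (join) of two partial colorings (values of `φ` take precedence). -/
def joinP (φ ψ : FPC Γ) : FPC Γ :=
  ⟨fun δ => match φ.1 δ with | some c => some c | none => ψ.1 δ, by
    apply (φ.2.union ψ.2).subset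
    intro δ hδ
    by_cases h : φ.1 δ = none
    · right
      simp only [mem_setOf_eq, h] at hδ
      exact hδ
    · exact Or.inl h⟩

/-- The union of a finite list of partial colorings. -/
def joinList (l : List (FPC Γ)) : FPC Γ := l.foldr joinP (emptyP Γ)

/-- `φ[γ, r]`: the restriction of `φ` to the closed ball `B(γ, r)`. -/
noncomputable def restrictBall [MetricSpace Γ] (φ : FPC Γ) (γ : Γ) (r : ℝ) : FPC Γ :=
  ⟨fun δ => if dist γ δ ≤ r then φ.1 δ else none, by
    apply φ.2.subset
    intro δ hδ
    by_cases h : dist γ δ ≤ r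
    · simp only [mem_setOf_eq, if_pos h] at hδ
      exact hδ
    · simp only [mem_setOf_eq, if_neg h] at hδ
      exact absurd rfl hδ⟩

/-- `φ ∪ {(γ, c)}`. -/
def insertP [DecidableEq Γ] (φ : FPC Γ) (γ : Γ) (c : ℕ) : FPC Γ :=
  ⟨fun δ => if δ = γ then some c else φ.1 δ, by
    apply (φ.2.insert γ).subset
    intro δ hδ
    by_cases h : δ = γ
    · exact Or.inl h
    · right
      simp only [mem_setOf_eq, if_neg h] at hδ
      exact hδ⟩

/-- The restriction of a total coloring `ω` to a finite set `S`. -/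
def restrictTo [DecidableEq Γ] (ω : Γ → ℕ) (S : Finset Γ) : FPC Γ :=
  ⟨fun δ => if δ ∈ S then some (ω δ) else none, by
    apply S.finite_toSet.subset
    intro δ hδ
    by_cases h : δ ∈ S
    · exact h
    · simp only [mem_setOf_eq, if_neg h] at hδ
      exact absurd rfl hδ⟩

/-- Post-composition of a partial coloring with `ρ : ℕ → ℕ`. -/
def mapP (ρ : ℕ → ℕ) (φ : FPC Γ) : FPC Γ :=
  ⟨fun δ => (φ.1 δ).map ρ, by
    apply φ.2.subset
    intro δ hδ
    intro h
    simp only [mem_setOf_eq, h] at hδ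
    exact hδ rfl⟩

/-- `ψ` is a restriction of `φ`. -/
def IsRestrictionOf (ψ φ : FPC Γ) : Prop := ∀ δ : Γ, ψ.1 δ = none ∨ ψ.1 δ = φ.1 δ

/-- A `Γ`-ideal: a shift-invariant set of finite partial colorings closed under
restrictions. -/
def IsGammaIdeal [Group Γ] (P : Set (FPC Γ)) : Prop :=
  (∀ (γ : Γ), ∀ φ ∈ P, shiftP γ φ ∈ P) ∧
  (∀ φ ∈ P, ∀ ψ : FPC Γ, IsRestrictionOf ψ φ → ψ ∈ P)

/-- An extendable `Γ`-ideal. -/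
def IsExtendable [DecidableEq Γ] (P : Set (FPC Γ)) : Prop :=
  ∀ φ ∈ P, ∀ γ : Γ, φ.1 γ = none → ∃ c : ℕ, insertP φ γ c ∈ P

/-- `φ` and `ψ` are `R`-separated: `dist(dom φ, dom ψ) > R φ + R ψ`. -/
def RSeparated [MetricSpace Γ] (R : FPC Γ → ℝ) (φ ψ : FPC Γ) : Prop :=
  ∀ γ ∈ domP φ, ∀ δ ∈ domP ψ, R φ + R ψ < dist γ δ

/-- The join property of a `Γ`-ideal `P`. -/
def HasJoinProperty [Group Γ] [MetricSpace Γ] (P : Set (FPC Γ)) : Prop :=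
  ∃ R : FPC Γ → ℝ, (∀ φ, 0 ≤ R φ) ∧ (∀ (γ : Γ), ∀ φ ∈ P, R (shiftP γ φ) = R φ) ∧
    ∀ l : List (FPC Γ), (∀ φ ∈ l, φ ∈ P) → l.Pairwise (RSeparated R) → joinList l ∈ P

/-- `P^loc_r`: partial colorings that are `r`-locally in `P`. -/
def LocallyIn [MetricSpace Γ] (P : Set (FPC Γ)) (r : ℕ → ℝ) : Set (FPC Γ) :=
  {φ | ∀ (γ : Γ) (c : ℕ), φ.1 γ = some c → restrictBall φ γ (r c) ∈ P}

/-- A local `Γ`-ideal. -/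
def IsLocal [MetricSpace Γ] (P : Set (FPC Γ)) : Prop :=
  ∃ r : ℕ → ℝ, (∀ c, 0 ≤ r c) ∧ P = LocallyIn P r

/-- `Col(P)`: colorings all of whose finite restrictions lie in `P`. -/
def ColOf [DecidableEq Γ] (P : Set (FPC Γ)) : Set (Γ → ℕ) :=
  {ω | ∀ S : Finset Γ, restrictTo ω S ∈ P}

/-! ### The space of Baire measurable functions -/

/-- Baire measurable functions from `X` to `Y`. -/
abbrev BMFunSub (X Y : Type*) [TopologicalSpace X] [MeasurableSpace Y] :=
  {f : X → Y // BaireMFun f}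

/-- Equality on a comeager set. -/
def BFunRel {X Y : Type*} [TopologicalSpace X] [MeasurableSpace Y]
    (f g : BMFunSub X Y) : Prop := {x : X | f.1 x = g.1 x} ∈ residual X

/-- `B(X,Y)`: Baire measurable functions modulo equality on a comeager set. -/
abbrev BFun (X Y : Type*) [TopologicalSpace X] [MeasurableSpace Y] :=
  Quot (BFunRel (X := X) (Y := Y))

/-- `[U, A]`: the classes of functions `f` with `U ∖ f⁻¹(A)` meager. -/
def forceSet {X Y : Type*} [TopologicalSpace X] [MeasurableSpace Y]
    (U : Set X) (A : Set Y) : Set (BFun X Y) :=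
  {F | ∃ f : BMFunSub X Y, Quot.mk BFunRel f = F ∧ IsMeagre (U \ f.1 ⁻¹' A)}

/-- `Σ(X,Y)`: the σ-algebra generated by the sets `[U, A]` for `U` nonempty open
and `A` Borel. -/
def SigmaXY (X Y : Type*) [TopologicalSpace X] [MeasurableSpace Y] :
    MeasurableSpace (BFun X Y) :=
  MeasurableSpace.generateFrom
    {S | ∃ (U : Set X) (A : Set Y), IsOpen U ∧ U.Nonempty ∧ MeasurableSet A ∧ S = forceSet U A}

section Aux

variable {X : Type*} [TopologicalSpace X]

lemma bairem_of_meagre {S : Set X} (h : IsMeagre S) : BaireMSet S := by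
  refine ⟨∅, isOpen_empty, ?_⟩
  apply h.mono
  intro x hx
  rcases Set.mem_symmDiff.1 hx with ⟨h1, _⟩ | ⟨h1, _⟩
  · exact h1
  · exact absurd h1 (Set.notMem_empty x)

lemma bairem_iUnion {S : ℕ → Set X} (h : ∀ n, BaireMSet (S n)) :
    BaireMSet (⋃ n, S n) := by
  choose U hUo hUm using h
  refine ⟨⋃ n, U n, isOpen_iUnion hUo, ?_⟩
  apply (isMeagre_iUnion (fun n => hUm n)).mono
  intro x hx
  rcases Set.mem_symmDiff.1 hx with ⟨h1, h2⟩ | ⟨h1, h2⟩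
  · obtain ⟨n, hn⟩ := Set.mem_iUnion.1 h1
    exact Set.mem_iUnion.2 ⟨n, Set.mem_symmDiff.2 (Or.inl ⟨hn,
      fun hc => h2 (Set.mem_iUnion.2 ⟨n, hc⟩)⟩)⟩
  · obtain ⟨n, hn⟩ := Set.mem_iUnion.1 h1
    exact Set.mem_iUnion.2 ⟨n, Set.mem_symmDiff.2 (Or.inr ⟨hn,
      fun hc => h2 (Set.mem_iUnion.2 ⟨n, hc⟩)⟩)⟩

lemma meagre_frontier_of_open {W : Set X} (hW : IsOpen W) :
    IsMeagre (closure W \ W) := by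
  have hcl : IsClosed (closure W \ W) :=
    IsClosed.sdiff isClosed_closure hW
  have hint : interior (closure W \ W) = ∅ := by
    by_contra h
    obtain ⟨x, hx⟩ := Set.nonempty_iff_ne_empty.2 h
    have hxcl : x ∈ closure W := (interior_subset hx).1
    have : (interior (closure W \ W) ∩ W).Nonempty := by
      have := mem_closure_iff.1 hxcl _ isOpen_interior hx
      exact this
    obtain ⟨y, hy1, hy2⟩ := this
    exact (interior_subset hy1).2 hy2
  have hnd : IsNowhereDense (closure W \ W) := hcl.isNowhereDense_iff.2 hint
  rw [IsMeagre]
  exact residual_of_dense_open (isOpen_compl_iff.2 hcl)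
    (interior_eq_empty_iff_dense_compl.1 hint)

lemma bairem_diff_open {U W : Set X} (hU : IsOpen U) (hW : IsOpen W) :
    BaireMSet (U \ W) := by
  refine ⟨U ∩ (closure W)ᶜ, hU.inter (isOpen_compl_iff.2 isClosed_closure), ?_⟩
  apply (meagre_frontier_of_open hW).mono
  intro x hx
  rcases Set.mem_symmDiff.1 hx with ⟨h1, h2⟩ | ⟨h1, h2⟩
  · constructor
    · by_contra hc
      exact h2 ⟨h1.1, hc⟩
    · exact h1.2
  · exact absurd ⟨h1.1, fun hc => h1.2 (subset_closure hc)⟩ h2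

end Aux

/-- Marks–Unger: for every free continuous action of `Γ` on a nonempty Polish space and
every sequence of radii there is a Baire measurable coloring whose color classes are
suitably spread out. -/
theorem stmt10 {Γ : Type*} [Group Γ] [Countable Γ] [Infinite Γ] [MetricSpace Γ]
    (hinv : ∀ γ δ g : Γ, dist (γ * g) (δ * g) = dist γ δ)
    (hproper : ∀ (γ : Γ) (r : ℝ), (Metric.closedBall γ r).Finite)
    (X : Type*) [TopologicalSpace X] [PolishSpace X] [Nonempty X] [MulAction Γ X]
    (hcont : ∀ γ : Γ, Continuous fun x : X => γ • x)
    (hfree : ∀ (γ : Γ) (x : X), γ • x = x → γ = 1)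
    (d : ℕ → ℝ) (hd : ∀ c, 0 ≤ d c) :
    ∃ f : X → ℕ, BaireMFun f ∧
      ∀ (c : ℕ) (x y : X), x ≠ y → f x = c → f y = c →
        ∀ γ : Γ, γ • x = y → d c < dist (1 : Γ) γ := by
  classical
  obtain ⟨eΓ, heΓ⟩ := exists_surjective_nat Γ
  obtain ⟨b, hbc, hbne, hbasis⟩ := TopologicalSpace.exists_countable_basis X
  have hbnonempty : b.Nonempty := by
    obtain ⟨x0⟩ := (inferInstance : Nonempty X)
    obtain ⟨v, hv, _, _⟩ := hbasis.exists_subset_of_mem_open (Set.mem_univ x0) isOpen_univ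
    exact ⟨v, hv⟩
  obtain ⟨V, hV⟩ := hbc.exists_eq_range hbnonempty
  have hVopen : ∀ k, IsOpen (V k) := fun k => hbasis.isOpen (hV ▸ Set.mem_range_self k)
  have hVne : ∀ k, (V k).Nonempty := by
    intro k
    rcases Set.eq_empty_or_nonempty (V k) with h | h
    · exact absurd (h ▸ (hV ▸ Set.mem_range_self k : V k ∈ b)) hbne
    · exact h
  -- key: in each basic open set, a nonempty open independent subset
  have key : ∀ k : ℕ, ∃ U : Set X, IsOpen U ∧ U.Nonempty ∧ U ⊆ V k ∧
      ∀ γ : Γ, γ ≠ 1 → dist (1:Γ) γ ≤ d (2*k) → ∀ x ∈ U, γ • x ∉ U := by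
    intro k
    obtain ⟨x, hx⟩ := hVne k
    set S : Set Γ := {γ | γ ≠ 1 ∧ dist (1:Γ) γ ≤ d (2*k)} with hS
    have hSfin : S.Finite := (hproper 1 (d (2*k))).subset (by
      intro γ hγ
      exact Metric.mem_closedBall.2 (by rw [dist_comm]; exact hγ.2))
    have hsep : ∀ γ : Γ, ∃ A B : Set X, IsOpen A ∧ IsOpen B ∧ x ∈ A ∧
        (γ ∈ S → γ • x ∈ B ∧ Disjoint A B) := by
      intro γ
      by_cases hγ : γ ∈ S
      · have hne : γ • x ≠ x := fun h => hγ.1 (hfree γ x h)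
        obtain ⟨B, A, hB, hA, hxB, hxA, hdisj⟩ := t2_separation hne
        exact ⟨A, B, hA, hB, hxA, fun _ => ⟨hxB, hdisj.symm⟩⟩
      · exact ⟨Set.univ, Set.univ, isOpen_univ, isOpen_univ, Set.mem_univ x,
          fun h => absurd h hγ⟩
    choose A B hAo hBo hxA hSspec using hsep
    refine ⟨V k ∩ ⋂ γ ∈ S, (A γ ∩ (fun y => γ • y) ⁻¹' B γ), ?_, ?_, ?_, ?_⟩
    · exact (hVopen k).inter (hSfin.isOpen_biInter
        (fun γ _ => (hAo γ).inter ((hBo γ).preimage (hcont γ))))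
    · refine ⟨x, hx, Set.mem_iInter₂.2 (fun γ hγ => ⟨hxA γ, (hSspec γ hγ).1⟩)⟩
    · exact Set.inter_subset_left
    · intro γ hγ1 hγ2 y hy hcy
      have hγS : γ ∈ S := ⟨hγ1, hγ2⟩
      have h1 : γ • y ∈ B γ := (Set.mem_iInter₂.1 hy.2 γ hγS).2
      have h2 : γ • y ∈ A γ := (Set.mem_iInter₂.1 hcy.2 γ hγS).1
      exact Set.disjoint_left.1 (hSspec γ hγS).2 h2 h1
  choose U hUo hUne hUsub hUind using key
  set C : Set X := ⋃ k, U k with hC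
  have hCopen : IsOpen C := isOpen_iUnion hUo
  have hCdense : Dense C := by
    rw [dense_iff_inter_open]
    intro W hWo hWne
    obtain ⟨x, hx⟩ := hWne
    obtain ⟨v, hv, _, hvW⟩ := hbasis.exists_subset_of_mem_open hx hWo
    obtain ⟨k, hk⟩ := (hV ▸ hv : v ∈ Set.range V)
    obtain ⟨y, hy⟩ := hUne k
    exact ⟨y, hvW (hk ▸ hUsub k hy), Set.mem_iUnion.2 ⟨k, hy⟩⟩
  have hM : IsMeagre Cᶜ := by
    rw [IsMeagre, compl_compl]
    exact residual_of_dense_open hCopen hCdense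
  -- orbit representatives
  have hrep_orbit : ∀ x : X, ∃ n : ℕ,
      eΓ n • (Quotient.mk (MulAction.orbitRel Γ X) x).out = x := by
    intro x
    have h := Quotient.mk_out (s := MulAction.orbitRel Γ X) x
    rw [MulAction.orbitRel_apply, MulAction.mem_orbit_iff] at h
    obtain ⟨γ, hγ⟩ := h
    obtain ⟨n, hn⟩ := heΓ γ⁻¹
    exact ⟨n, by rw [hn, ← hγ, inv_smul_smul]⟩
  set rep : X → X := fun x => (Quotient.mk (MulAction.orbitRel Γ X) x).out with hrepdef
  set f : X → ℕ := fun x =>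
    if hx : ∃ k, x ∈ U k then 2 * Nat.find hx else 2 * Nat.find (hrep_orbit x) + 1
    with hfdef
  have hfpos : ∀ x (hx : ∃ k, x ∈ U k), f x = 2 * Nat.find hx := fun x hx => dif_pos hx
  have hfneg : ∀ x (hx : ¬ ∃ k, x ∈ U k), f x = 2 * Nat.find (hrep_orbit x) + 1 :=
    fun x hx => dif_neg hx
  refine ⟨f, ?_, ?_⟩
  · -- Baire measurability
    intro B hB
    have hsplit : f ⁻¹' B = ⋃ c : ℕ, if c ∈ B then f ⁻¹' {c} else ∅ := by
      ext x
      simp only [Set.mem_preimage, Set.mem_iUnion]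
      constructor
      · intro h
        exact ⟨f x, by rw [if_pos h]; exact rfl⟩
      · rintro ⟨c, hc⟩
        split_ifs at hc with h
        · rw [Set.mem_preimage, Set.mem_singleton_iff] at hc
          rw [hc]; exact h
        · exact absurd hc (Set.notMem_empty x)
    rw [hsplit]
    apply bairem_iUnion
    intro c
    split_ifs with hc
    · rcases Nat.even_or_odd c with ⟨k, hk⟩ | ⟨k, hk⟩
      · -- even color: preimage is U k minus earlier pieces
        have heq : f ⁻¹' {c} = U k \ ⋃ (j : ℕ), ⋃ (_ : j < k), U j := by
          ext x
          simp only [Set.mem_preimage, Set.mem_singleton_iff, Set.mem_diff,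
            Set.mem_iUnion, not_exists]
          constructor
          · intro h
            by_cases hx : ∃ j, x ∈ U j
            · rw [hfpos x hx] at h
              have hkk : Nat.find hx = k := by omega
              have := Nat.find_eq_iff hx |>.1 hkk
              exact ⟨this.1, fun j hj => this.2 j hj⟩
            · rw [hfneg x hx] at h; omega
          · rintro ⟨h1, h2⟩
            have hx : ∃ j, x ∈ U j := ⟨k, h1⟩
            rw [hfpos x hx]
            have : Nat.find hx = k := (Nat.find_eq_iff hx).2 ⟨h1, fun j hj => h2 j hj⟩
            omega
        rw [heq]
        exact bairem_diff_open (hUo k)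
          (isOpen_iUnion (fun j => isOpen_iUnion (fun _ => hUo j)))
      · -- odd color: preimage is contained in the meagre set Cᶜ
        apply bairem_of_meagre
        apply hM.mono
        intro x hx
        simp only [Set.mem_preimage, Set.mem_singleton_iff] at hx
        intro hxC
        have hx' : ∃ j, x ∈ U j := Set.mem_iUnion.1 hxC
        rw [hfpos x hx'] at hx
        omega
    · exact bairem_of_meagre IsMeagre.empty
  · -- the coloring property
    intro c x y hxy hfx hfy γ hγ
    have hγ1 : γ ≠ 1 := by
      rintro rfl
      rw [one_smul] at hγ
      exact hxy hγ
    by_cases hx : ∃ k, x ∈ U k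
    · by_cases hy : ∃ k, y ∈ U k
      · rw [hfpos x hx] at hfx
        rw [hfpos y hy] at hfy
        have hkk : Nat.find hx = Nat.find hy := by omega
        have hxU : x ∈ U (Nat.find hx) := Nat.find_spec hx
        have hyU : y ∈ U (Nat.find hx) := by rw [hkk]; exact Nat.find_spec hy
        by_contra hle
        push_neg at hle
        have hle' : dist (1:Γ) γ ≤ d (2 * Nat.find hx) := by
          rw [hfx]; exact hle
        exact (hUind (Nat.find hx) γ hγ1 hle' x hxU) (hγ ▸ hyU)
      · rw [hfpos x hx] at hfx
        rw [hfneg y hy] at hfy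
        omega
    · by_cases hy : ∃ k, y ∈ U k
      · rw [hfneg x hx] at hfx
        rw [hfpos y hy] at hfy
        omega
      · rw [hfneg x hx] at hfx
        rw [hfneg y hy] at hfy
        exfalso
        have hrepeq : rep x = rep y := by
          have : Quotient.mk (MulAction.orbitRel Γ X) x
              = Quotient.mk (MulAction.orbitRel Γ X) y := by
            exact Quotient.sound (MulAction.orbitRel_apply.2
              (MulAction.mem_orbit_iff.2 ⟨γ⁻¹, by rw [← hγ, inv_smul_smul]⟩))
          simp only [hrepdef, this]
        have hnn : Nat.find (hrep_orbit x) = Nat.find (hrep_orbit y) := by omega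
        have h1 := Nat.find_spec (hrep_orbit x)
        have h2 := Nat.find_spec (hrep_orbit y)
        apply hxy
        rw [← h1, ← h2, hnn, show (Quotient.mk (MulAction.orbitRel Γ X) x).out
          = (Quotient.mk (MulAction.orbitRel Γ X) y).out from hrepeq]

end DescColor
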